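/- Under the standing setup with k_1 = 1 and k_2 > 2 (in which case x_0 = e_0 + e_1 + e_{k_2} − e_{k_3}), one has k_3 = k_2 + 1 and the initial segment (σ_0, σ_1, …, σ_{k_3}) of σ equals (1, 1, 2, …, 2, σ_{k_2}, σ_{k_2} + 2), where the entry 2 occurs s = k_2 − 2 ≥ 1 times. -/

import Mathlib

namespace Prism

/-- Gram matrix of a C-type lattice with parameters `a 1, …, a n` (vertices `x_0, …, x_n`). -/
def CGram (n : ℕ) (a : ℕ → ℤ) : Fin (n + 1) → Fin (n + 1) → ℤ := fun i j =>
  if (i : ℕ) = (j : ℕ) then (if (i : ℕ) = 0 then 4 else a (i : ℕ))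
  else if ((i : ℕ) = 0 ∧ (j : ℕ) = 1) ∨ ((i : ℕ) = 1 ∧ (j : ℕ) = 0) then -2
  else if (i : ℕ) + 1 = (j : ℕ) ∨ (j : ℕ) + 1 = (i : ℕ) then -1
  else 0

/-- The symmetric bilinear form of a C-type lattice. -/
def CForm (n : ℕ) (a : ℕ → ℤ) (v w : Fin (n + 1) → ℤ) : ℤ :=
  ∑ i : Fin (n + 1), ∑ j : Fin (n + 1), v i * CGram n a i j * w j

/-- Conditions on the parameters of a C-type lattice: `n ≥ 1`, all `a_i ≥ 2`, `a_1 ≥ 3`. -/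
def CTypeParams (n : ℕ) (a : ℕ → ℤ) : Prop :=
  1 ≤ n ∧ (∀ i, 1 ≤ i → i ≤ n → 2 ≤ a i) ∧ 3 ≤ a 1

/-- Numerator/denominator pair of the Hirzebruch–Jung continued fraction `[a_1, …, a_k]⁻`. -/
def hjPair : List ℤ → ℤ × ℤ
  | [] => (1, 0)
  | x :: l => (x * (hjPair l).1 - (hjPair l).2, (hjPair l).1)

/-- `a 1, …, a n` are the coefficients of the HJ expansion of `(2q-p)/(q-p)`, all `≥ 2`
(`a_1 ≥ 3` being forced since `q > p`); i.e. the data defining the lattice `C(p,q)`. -/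
def IsCpq (p q : ℤ) (n : ℕ) (a : ℕ → ℤ) : Prop :=
  CTypeParams n a ∧ hjPair ((List.range' 1 n).map fun i => a i) = (2 * q - p, q - p)

/-- Standard dot product on `ℤ^m`. -/
def dotF {m : ℕ} (v w : Fin m → ℤ) : ℤ := ∑ i, v i * w i

/-- Orthogonal complement of `σ` in `ℤ^m`. -/
def perp {m : ℕ} (σ : Fin m → ℤ) : Submodule ℤ (Fin m → ℤ) where
  carrier := {v | dotF v σ = 0}
  add_mem' := by
    intro a b ha hb
    simp only [Set.mem_setOf_eq, dotF, Pi.add_apply, add_mul, Finset.sum_add_distrib] at *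
    omega
  zero_mem' := by simp [dotF]
  smul_mem' := by
    intro c v hv
    simp only [Set.mem_setOf_eq, dotF, Pi.smul_apply, smul_eq_mul, mul_assoc] at *
    rw [← Finset.mul_sum, hv, mul_zero]

/-- Changemaker vector in `ℤ^m`. -/
def IsChangemaker (m : ℕ) (σ : Fin m → ℤ) : Prop :=
  Monotone σ ∧ (∀ i, 0 ≤ σ i) ∧
    ∀ k : ℤ, 0 ≤ k → k ≤ ∑ i, σ i → ∃ S : Finset (Fin m), k = ∑ i ∈ S, σ i

/-- The interval `x_a + x_{a+1} + ⋯ + x_b` in a C-type lattice of rank `n+1`. -/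
def intVec (n : ℕ) (a b : ℕ) : Fin (n + 1) → ℤ := fun i =>
  if a ≤ (i : ℕ) ∧ (i : ℕ) ≤ b then 1 else 0

/-- Breakability with respect to the C-type form. -/
def CBreakable (n : ℕ) (a : ℕ → ℤ) (ℓ : Fin (n + 1) → ℤ) : Prop :=
  ∃ x y : Fin (n + 1) → ℤ, ℓ = x + y ∧ 3 ≤ CForm n a x x ∧ 3 ≤ CForm n a y y ∧
    CForm n a x y = -1

/-- Breakability inside the lattice `(σ)^⊥ ⊆ ℤ^m`. -/
def PerpBreakable {m : ℕ} (σ : Fin m → ℤ) (ℓ : Fin m → ℤ) : Prop :=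
  ∃ x y : Fin m → ℤ, x ∈ perp σ ∧ y ∈ perp σ ∧ ℓ = x + y ∧
    3 ≤ dotF x x ∧ 3 ≤ dotF y y ∧ dotF x y = -1

/-- The number `δ([I],[J])` of dangling edges for intervals `[a,b]` and `[c,d]`,
counted with multiplicity (the edge `x_0x_1` is doubled). -/
def deltaCount (n a b c d : ℕ) : ℤ :=
  ∑ k ∈ Finset.range n,
    if (((a ≤ k ∧ k ≤ b) ∧ (c ≤ k + 1 ∧ k + 1 ≤ d)) ∨
          ((c ≤ k ∧ k ≤ d) ∧ (a ≤ k + 1 ∧ k + 1 ≤ b))) ∧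
        (¬((a ≤ k ∧ k ≤ b) ∧ (c ≤ k ∧ k ≤ d)) ∨
          ¬((a ≤ k + 1 ∧ k + 1 ≤ b) ∧ (c ≤ k + 1 ∧ k + 1 ≤ d)))
    then (if k = 0 then 2 else 1) else 0

/-- `v_j` is tight: `σ_j = 1 + σ_0 + ⋯ + σ_{j-1}`. -/
def IsTight {m : ℕ} (σ : Fin m → ℤ) (j : Fin m) : Prop :=
  σ j = 1 + ∑ i ∈ Finset.Iio j, σ i

/-- The vector `2e_0 + e_1 + ⋯ + e_{j-1} - e_j`. -/
def tightVec (m : ℕ) (j : Fin m) : Fin m → ℤ := fun i =>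
  if i = j then -1 else if i < j then (if (i : ℕ) = 0 then 2 else 1) else 0

/-- `A ⊆ {0,…,j-1}` with `σ_j = ∑_{i ∈ A} σ_i`, maximizing `∑_{i ∈ A} 2^i`. -/
def MaxSubsetRep {m : ℕ} (σ : Fin m → ℤ) (j : Fin m) (A : Finset (Fin m)) : Prop :=
  A ⊆ Finset.Iio j ∧ σ j = ∑ i ∈ A, σ i ∧
    ∀ B ⊆ Finset.Iio j, σ j = ∑ i ∈ B, σ i →
      ∑ i ∈ B, 2 ^ (i : ℕ) ≤ ∑ i ∈ A, 2 ^ (i : ℕ)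

/-- The vector `∑_{i ∈ A} e_i - e_j`. -/
def subsetVec (m : ℕ) (A : Finset (Fin m)) (j : Fin m) : Fin m → ℤ := fun i =>
  if i = j then -1 else if i ∈ A then 1 else 0

/-- `v` is the standard basis vector `v_j` of the changemaker lattice `(σ)^⊥`. -/
def IsStdBasisVec {m : ℕ} (σ : Fin m → ℤ) (j : Fin m) (v : Fin m → ℤ) : Prop :=
  (IsTight σ j ∧ v = tightVec m j) ∨
    (¬IsTight σ j ∧ ∃ A : Finset (Fin m), MaxSubsetRep σ j A ∧ v = subsetVec m A j)

/-- The subset `A` has a gappy index for `v_j`: some `i ∈ A` with `i < j - 1`, `i + 1 ∉ A`. -/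
def IsGappyAt {m : ℕ} (A : Finset (Fin m)) (j : Fin m) : Prop :=
  ∃ i ∈ A, (i : ℕ) + 1 < (j : ℕ) ∧ ∀ i' ∈ A, (i' : ℕ) ≠ (i : ℕ) + 1

/-- The reflection about `x_0^⊥` (using that `⟨x_0, v⟩` is always even and `⟨x_0,x_0⟩ = 4`). -/
def cRefl (n : ℕ) (a : ℕ → ℤ) (v : Fin (n + 1) → ℤ) : Fin (n + 1) → ℤ :=
  v - (CForm n a (Pi.single 0 1) v / 2) • Pi.single 0 1

/-! ### Auxiliary machinery for statement17 -/

open Finset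

/-- Extension of a vector on `Fin (n+1)` to `ℕ` by zero. -/
def ext (n : ℕ) (v : Fin (n + 1) → ℤ) : ℕ → ℤ :=
  fun j => if h : j < n + 1 then v ⟨j, h⟩ else 0

lemma ext_apply (n : ℕ) (v : Fin (n + 1) → ℤ) (l : Fin (n + 1)) :
    ext n v l.val = v l := by
  simp [ext, l.isLt]

lemma ext_lt (n : ℕ) (v : Fin (n + 1) → ℤ) (j : ℕ) (h : j < n + 1) :
    ext n v j = v ⟨j, h⟩ := dif_pos h

lemma ext_ge (n : ℕ) (v : Fin (n + 1) → ℤ) (j : ℕ) (h : n + 1 ≤ j) : ext n v j = 0 := by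
  have : ¬ j < n + 1 := by omega
  simp [ext, this]

private lemma sum_shift (n : ℕ) (f : ℕ → ℤ) :
    ∑ i ∈ Finset.range n, f (i + 1) = (∑ i ∈ Finset.range n, f i) + f n - f 0 := by
  have h1 := Finset.sum_range_succ f n
  have h2 := Finset.sum_range_succ' f n
  linarith

/-- `ℕ`-indexed version of the Gram matrix. -/
def nGram (a : ℕ → ℤ) : ℕ → ℕ → ℤ := fun i j =>
  if i = j then (if i = 0 then 4 else a i)
  else if (i = 0 ∧ j = 1) ∨ (i = 1 ∧ j = 0) then -2
  else if i + 1 = j ∨ j + 1 = i then -1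
  else 0

lemma CGram_eq (n : ℕ) (a : ℕ → ℤ) (i j : Fin (n + 1)) :
    CGram n a i j = nGram a i.val j.val := rfl

/-- diagonal entries -/
def dgE (a : ℕ → ℤ) (i : ℕ) : ℤ := if i = 0 then 4 else a i
/-- super/sub-diagonal entries -/
def ugE (i : ℕ) : ℤ := if i = 0 then -2 else -1

lemma nGram_decomp (a : ℕ → ℤ) (i j : ℕ) :
    nGram a i j = (if j = i then dgE a i else 0) + (if j = i + 1 then ugE i else 0)
      + (if j + 1 = i then ugE j else 0) := by
  unfold nGram dgE ugE
  split_ifs <;> first | (exfalso; omega) | rfl | ring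

/-- Evaluation of `CForm` in terms of extended coordinates. -/
lemma CForm_eval (n : ℕ) (a : ℕ → ℤ) (hn : 1 ≤ n) (v w : Fin (n + 1) → ℤ) :
    CForm n a v w =
      4 * ext n v 0 * ext n w 0
        - 2 * (ext n v 0 * ext n w 1 + ext n v 1 * ext n w 0)
        + (∑ i ∈ Finset.range n, a (i + 1) * ext n v (i + 1) * ext n w (i + 1))
        - ∑ i ∈ Finset.range n,
            (ext n v (i + 1) * ext n w (i + 2) + ext n v (i + 2) * ext n w (i + 1)) := by
  set V := ext n v with hV
  set W := ext n w with hW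
  have key : CForm n a v w = ∑ i ∈ Finset.range (n + 1), ∑ j ∈ Finset.range (n + 1),
      V i * nGram a i j * W j := by
    rw [CForm, ← Fin.sum_univ_eq_sum_range
      (fun i => ∑ j ∈ Finset.range (n + 1), V i * nGram a i j * W j) (n + 1)]
    apply Finset.sum_congr rfl
    intro i _
    rw [← Fin.sum_univ_eq_sum_range (fun j => V i.val * nGram a i.val j * W j) (n + 1)]
    apply Finset.sum_congr rfl
    intro j _
    rw [hV, hW, ext_apply, ext_apply, CGram_eq]
  have inner : ∀ i ∈ Finset.range (n + 1),
      (∑ j ∈ Finset.range (n + 1), V i * nGram a i j * W j)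
        = V i * dgE a i * W i + V i * ugE i * W (i + 1)
          + (if 1 ≤ i then V i * ugE (i - 1) * W (i - 1) else 0) := by
    intro i hi
    have hpt : ∀ j ∈ Finset.range (n + 1), V i * nGram a i j * W j
        = (if j = i then V i * dgE a i * W j else 0)
          + (if j = i + 1 then V i * ugE i * W j else 0)
          + (if j = i - 1 then (if 1 ≤ i then V i * ugE j * W j else 0) else 0) := by
      intro j _
      rw [nGram_decomp]
      split_ifs <;> first | (exfalso; omega) | ring
    rw [Finset.sum_congr rfl hpt, Finset.sum_add_distrib, Finset.sum_add_distrib]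
    have e1 : (∑ j ∈ Finset.range (n + 1), if j = i then V i * dgE a i * W j else 0)
        = V i * dgE a i * W i := by
      rw [Finset.sum_ite_eq' (Finset.range (n + 1)) i]
      simp [hi]
    have e2 : (∑ j ∈ Finset.range (n + 1), if j = i + 1 then V i * ugE i * W j else 0)
        = V i * ugE i * W (i + 1) := by
      rw [Finset.sum_ite_eq' (Finset.range (n + 1)) (i + 1)]
      by_cases h : i + 1 ∈ Finset.range (n + 1)
      · simp [h]
      · have : W (i + 1) = 0 := by
          rw [hW]; exact ext_ge _ _ _ (by simpa [Finset.mem_range] using h)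
        simp [h, this]
    have e3 : (∑ j ∈ Finset.range (n + 1), if j = i - 1 then
          (if 1 ≤ i then V i * ugE j * W j else 0) else 0)
        = (if 1 ≤ i then V i * ugE (i - 1) * W (i - 1) else 0) := by
      rw [Finset.sum_ite_eq' (Finset.range (n + 1)) (i - 1)]
      have : i - 1 ∈ Finset.range (n + 1) := by
        simp only [Finset.mem_range] at hi ⊢; omega
      simp [this]
    rw [e1, e2, e3]
  rw [key, Finset.sum_congr rfl inner]
  rw [Finset.sum_add_distrib, Finset.sum_add_distrib]
  have eA : (∑ i ∈ Finset.range (n + 1), V i * dgE a i * W i)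
      = 4 * V 0 * W 0 + ∑ i ∈ Finset.range n, a (i + 1) * V (i + 1) * W (i + 1) := by
    rw [Finset.sum_range_succ']
    have : ∀ i ∈ Finset.range n, V (i + 1) * dgE a (i + 1) * W (i + 1)
        = a (i + 1) * V (i + 1) * W (i + 1) := by
      intro i _
      rw [show dgE a (i + 1) = a (i + 1) from rfl]; ring
    rw [Finset.sum_congr rfl this]
    rw [show dgE a 0 = 4 from rfl]; ring
  have eB : (∑ i ∈ Finset.range (n + 1), V i * ugE i * W (i + 1))
      = -2 * V 0 * W 1 - ∑ i ∈ Finset.range n, V (i + 1) * W (i + 2) := by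
    rw [Finset.sum_range_succ']
    have : ∀ i ∈ Finset.range n, V (i + 1) * ugE (i + 1) * W (i + 1 + 1)
        = -(V (i + 1) * W (i + 2)) := by
      intro i _
      rw [show ugE (i + 1) = -1 from rfl]; ring
    rw [Finset.sum_congr rfl this, Finset.sum_neg_distrib]
    rw [show ugE 0 = -2 from rfl]; ring
  have eC : (∑ i ∈ Finset.range (n + 1), if 1 ≤ i then V i * ugE (i - 1) * W (i - 1) else 0)
      = -2 * V 1 * W 0 - ∑ i ∈ Finset.range n, V (i + 2) * W (i + 1) := by
    rw [Finset.sum_range_succ']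
    have h0 : (if 1 ≤ (0:ℕ) then V 0 * ugE (0 - 1) * W (0 - 1) else 0) = 0 := by norm_num
    rw [h0]
    have hpt : ∀ i ∈ Finset.range n, (if 1 ≤ i + 1 then V (i + 1) * ugE (i + 1 - 1) * W (i + 1 - 1) else 0)
        = V (i + 1) * ugE i * W i := by
      intro i _
      rw [if_pos (by omega)]
      norm_num
    rw [Finset.sum_congr rfl hpt]
    -- now peel the bottom again: n = (n-1)+1
    obtain ⟨p, hp⟩ : ∃ p, n = p + 1 := ⟨n - 1, by omega⟩
    subst hp
    rw [Finset.sum_range_succ' (fun i => V (i + 1) * ugE i * W i) p]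
    have h1 : V (0 + 1) * ugE 0 * W 0 = -2 * V 1 * W 0 := by
      rw [show ugE 0 = -2 from rfl, show (0 + 1) = 1 from rfl]; ring
    have hpt2 : ∀ i ∈ Finset.range p, V (i + 1 + 1) * ugE (i + 1) * W (i + 1)
        = -(V (i + 2) * W (i + 1)) := by
      intro i _
      rw [show ugE (i + 1) = -1 from rfl]; ring
    rw [Finset.sum_congr rfl hpt2, Finset.sum_neg_distrib, h1]
    have hlast : (∑ i ∈ Finset.range (p + 1), V (i + 2) * W (i + 1))
        = (∑ i ∈ Finset.range p, V (i + 2) * W (i + 1)) + V (p + 2) * W (p + 1) := by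
      exact Finset.sum_range_succ _ p
    have hV0 : V (p + 2) = 0 := by rw [hV]; exact ext_ge _ _ _ (by omega)
    rw [hlast, hV0]
    ring
  rw [eA, eB, eC, Finset.sum_add_distrib]
  ring

/-- The square decomposition of the quadratic form. -/
lemma CForm_self (n : ℕ) (a : ℕ → ℤ) (hn : 1 ≤ n) (c : Fin (n + 1) → ℤ) :
    CForm n a c c =
      (2 * ext n c 0 - ext n c 1) ^ 2 + (ext n c 1) ^ 2
        + (∑ i ∈ Finset.range n, (a (i + 1) - if i = 0 then 3 else 2) * (ext n c (i + 1)) ^ 2)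
        + ∑ i ∈ Finset.range n, (ext n c (i + 1) - ext n c (i + 2)) ^ 2 := by
  rw [CForm_eval n a hn c c]
  set C := ext n c with hCdef
  have hCn : C (n + 1) = 0 := ext_ge n c (n + 1) (by omega)
  have hsq2 : (∑ i ∈ Finset.range n, C (i + 2) ^ 2)
      = (∑ i ∈ Finset.range n, C (i + 1) ^ 2) + C (n + 1) ^ 2 - C 1 ^ 2 := by
    have h := sum_shift n (fun i => C (i + 1) ^ 2)
    norm_num at h
    convert h using 2 <;> norm_num
  have e4 : (∑ i ∈ Finset.range n, (C (i + 1) - C (i + 2)) ^ 2)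
      = (∑ i ∈ Finset.range n, C (i + 1) ^ 2) + (∑ i ∈ Finset.range n, C (i + 2) ^ 2)
        - 2 * ∑ i ∈ Finset.range n, C (i + 1) * C (i + 2) := by
    rw [Finset.mul_sum, ← Finset.sum_add_distrib, ← Finset.sum_sub_distrib]
    apply Finset.sum_congr rfl; intro i _; ring
  have ewt : (∑ i ∈ Finset.range n, (a (i + 1) - if i = 0 then 3 else 2) * C (i + 1) ^ 2)
      = (∑ i ∈ Finset.range n, a (i + 1) * C (i + 1) ^ 2)
        - (2 * (∑ i ∈ Finset.range n, C (i + 1) ^ 2) + C 1 ^ 2) := by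
    have pt : ∀ i ∈ Finset.range n, (a (i + 1) - if i = 0 then 3 else 2) * C (i + 1) ^ 2
        = a (i + 1) * C (i + 1) ^ 2 - (2 * C (i + 1) ^ 2 + (if i = 0 then C (i + 1) ^ 2 else 0)) := by
      intro i _
      by_cases h : i = 0
      · subst h; norm_num; ring
      · simp only [h, if_false]; ring
    rw [Finset.sum_congr rfl pt, Finset.sum_sub_distrib, Finset.sum_add_distrib,
      Finset.sum_ite_eq' (Finset.range n) 0 (fun i => C (i + 1) ^ 2)]
    have h0 : (0:ℕ) ∈ Finset.range n := Finset.mem_range.mpr (by omega)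
    rw [if_pos h0, Finset.mul_sum]
  have hs1 : (∑ i ∈ Finset.range n, a (i + 1) * C (i + 1) * C (i + 1))
      = ∑ i ∈ Finset.range n, a (i + 1) * C (i + 1) ^ 2 := by
    apply Finset.sum_congr rfl; intro i _; ring
  have hs2 : (∑ i ∈ Finset.range n, (C (i + 1) * C (i + 2) + C (i + 2) * C (i + 1)))
      = 2 * ∑ i ∈ Finset.range n, C (i + 1) * C (i + 2) := by
    rw [Finset.mul_sum]
    apply Finset.sum_congr rfl; intro i _; ring
  rw [hs1, hs2, ewt, e4, hsq2, hCn]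
  ring

/-- Pairing with the basis vector `x₀`. -/
lemma CForm_single0 (n : ℕ) (a : ℕ → ℤ) (hn : 1 ≤ n) (c : Fin (n + 1) → ℤ) :
    CForm n a c (Pi.single 0 1) = 4 * ext n c 0 - 2 * ext n c 1 := by
  rw [CForm_eval n a hn]
  have h0 : ext n (Pi.single 0 1) 0 = 1 := by
    have h := ext_apply n (Pi.single (0 : Fin (n+1)) (1:ℤ)) 0
    simpa using h
  have hpos : ∀ j : ℕ, 1 ≤ j → ext n (Pi.single (0 : Fin (n+1)) (1:ℤ)) j = 0 := by
    intro j hj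
    by_cases h : j < n + 1
    · rw [ext_lt n _ j h, Pi.single_apply]
      rw [if_neg (by simp only [Fin.ext_iff, Fin.val_zero]; omega)]
    · exact ext_ge _ _ _ (by omega)
  rw [h0, hpos 1 le_rfl]
  have hz1 : (∑ i ∈ Finset.range n,
      a (i + 1) * ext n c (i + 1) * ext n (Pi.single (0:Fin (n+1)) (1:ℤ)) (i + 1)) = 0 := by
    apply Finset.sum_eq_zero; intro i _
    rw [hpos (i + 1) (by omega)]; ring
  have hz2 : (∑ i ∈ Finset.range n,
      (ext n c (i + 1) * ext n (Pi.single (0:Fin (n+1)) (1:ℤ)) (i + 2)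
        + ext n c (i + 2) * ext n (Pi.single (0:Fin (n+1)) (1:ℤ)) (i + 1))) = 0 := by
    apply Finset.sum_eq_zero; intro i _
    rw [hpos (i + 1) (by omega), hpos (i + 2) (by omega)]; ring
  rw [hz1, hz2]
  ring

lemma ext_intVec (n ρ : ℕ) (hρ : ρ ≤ n) (j : ℕ) :
    ext n (intVec n 1 ρ) j = if 1 ≤ j ∧ j ≤ ρ then 1 else 0 := by
  by_cases h : j < n + 1
  · simp only [ext, dif_pos h, intVec]
  · rw [ext_ge _ _ _ (by omega), if_neg (by omega)]

/-- Pairing with an initial interval `A_ρ = x₁ + ⋯ + x_ρ`. -/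
lemma CForm_intVec (n : ℕ) (a : ℕ → ℤ) (ρ : ℕ) (hρ1 : 1 ≤ ρ) (hρn : ρ ≤ n)
    (ha1 : a 1 = 3) (ha2 : ∀ i, 2 ≤ i → i ≤ ρ → a i = 2) (c : Fin (n + 1) → ℤ) :
    CForm n a c (intVec n 1 ρ)
      = -2 * ext n c 0 + 2 * ext n c 1 + (ext n c ρ - ext n c (ρ + 1)) := by
  have hn : 1 ≤ n := le_trans hρ1 hρn
  rw [CForm_eval n a hn]
  set C := ext n c with hCdef
  have hW : ∀ j, ext n (intVec n 1 ρ) j = if 1 ≤ j ∧ j ≤ ρ then 1 else 0 := ext_intVec n ρ hρn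
  have hCn : C (n + 1) = 0 := ext_ge n c (n + 1) (by omega)
  rw [hW 0, hW 1, if_neg (by omega), if_pos (by omega)]
  set Sρ := ∑ i ∈ Finset.range n, (if i + 1 ≤ ρ then C (i + 1) else 0) with hSρ
  have eD : (∑ i ∈ Finset.range n, a (i + 1) * C (i + 1) * ext n (intVec n 1 ρ) (i + 1))
      = 2 * Sρ + C 1 := by
    have pt : ∀ i ∈ Finset.range n, a (i + 1) * C (i + 1) * ext n (intVec n 1 ρ) (i + 1)
        = 2 * (if i + 1 ≤ ρ then C (i + 1) else 0) + (if i = 0 then C (i + 1) else 0) := by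
      intro i _
      rw [hW (i + 1)]
      by_cases h0 : i = 0
      · subst h0
        rw [if_pos (by omega), if_pos (by omega), if_pos rfl, ha1]; ring
      · by_cases h1 : i + 1 ≤ ρ
        · rw [if_pos (by omega), if_pos h1, if_neg h0, ha2 (i + 1) (by omega) h1]; ring
        · rw [if_neg (by omega), if_neg h1, if_neg h0]; ring
    rw [Finset.sum_congr rfl pt, Finset.sum_add_distrib,
      Finset.sum_ite_eq' (Finset.range n) 0 (fun i => C (i + 1))]
    rw [if_pos (Finset.mem_range.mpr (by omega)), Finset.mul_sum]
  have eX : (∑ i ∈ Finset.range n, (if i + 2 ≤ ρ then C (i + 1) else 0)) = Sρ - C ρ := by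
    have pt : ∀ i ∈ Finset.range n, (if i + 2 ≤ ρ then C (i + 1) else 0)
        = (if i + 1 ≤ ρ then C (i + 1) else 0) - (if i = ρ - 1 then C ρ else 0) := by
      intro i _
      by_cases h1 : i = ρ - 1
      · subst h1
        rw [if_neg (by omega), if_pos (by omega), if_pos rfl]
        have : ρ - 1 + 1 = ρ := by omega
        rw [this]; ring
      · by_cases h2 : i + 2 ≤ ρ
        · rw [if_pos h2, if_pos (by omega), if_neg h1]; ring
        · rw [if_neg h2, if_neg (by omega), if_neg h1]; ring
    rw [Finset.sum_congr rfl pt, Finset.sum_sub_distrib,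
      Finset.sum_ite_eq' (Finset.range n) (ρ - 1) (fun _ => C ρ)]
    rw [if_pos (Finset.mem_range.mpr (by omega))]
  have eY : (∑ i ∈ Finset.range n, (if i + 1 ≤ ρ then C (i + 2) else 0))
      = Sρ + C (ρ + 1) - C 1 := by
    have h := sum_shift n (fun j => if j ≤ ρ then C (j + 1) else 0)
    beta_reduce at h
    have hpt : ∀ i ∈ Finset.range n, (if i + 1 ≤ ρ then C (i + 2) else 0)
        = (if i + 1 ≤ ρ then C (i + 1 + 1) else 0) := by
      intro i _; norm_num
    rw [Finset.sum_congr rfl hpt, h]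
    have hbody : (∑ j ∈ Finset.range n, (if j ≤ ρ then C (j + 1) else 0))
        = Sρ + C (ρ + 1) := by
      have pt2 : ∀ j ∈ Finset.range n, (if j ≤ ρ then C (j + 1) else 0)
          = (if j + 1 ≤ ρ then C (j + 1) else 0) + (if j = ρ then C (ρ + 1) else 0) := by
        intro j _
        by_cases h1 : j = ρ
        · subst h1; rw [if_pos le_rfl, if_neg (by omega), if_pos rfl]; ring
        · by_cases h2 : j ≤ ρ
          · rw [if_pos h2, if_pos (by omega), if_neg h1]; ring
          · rw [if_neg h2, if_neg (by omega), if_neg h1]; ring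
      rw [Finset.sum_congr rfl pt2, Finset.sum_add_distrib,
        Finset.sum_ite_eq' (Finset.range n) ρ (fun _ => C (ρ + 1))]
      by_cases h3 : ρ ∈ Finset.range n
      · rw [if_pos h3]
      · rw [if_neg h3]
        have hρeq : ρ = n := by
          have := Finset.mem_range.not.mp h3; omega
        subst hρeq
        rw [hCn]
    rw [hbody]
    have h2 : (if n ≤ ρ then C (n + 1) else 0) = 0 := by
      by_cases h2 : n ≤ ρ
      · rw [if_pos h2]; exact hCn
      · rw [if_neg h2]
    have h3 : (if 0 ≤ ρ then C (0 + 1) else 0) = C 1 := by rw [if_pos (Nat.zero_le ρ)]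
    rw [h2, h3]
    ring
  have ecross : (∑ i ∈ Finset.range n,
      (C (i + 1) * ext n (intVec n 1 ρ) (i + 2) + C (i + 2) * ext n (intVec n 1 ρ) (i + 1)))
      = (Sρ - C ρ) + (Sρ + C (ρ + 1) - C 1) := by
    rw [← eX, ← eY, ← Finset.sum_add_distrib]
    apply Finset.sum_congr rfl
    intro i _
    rw [hW (i + 2), hW (i + 1)]
    split_ifs <;> first | (exfalso; omega) | ring
  rw [eD, ecross]
  ring

private lemma abs_le_sq (x : ℤ) : |x| ≤ x ^ 2 := by
  rcases eq_or_ne x 0 with h | h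
  · simp [h]
  · have h1 : 1 ≤ |x| := Int.one_le_abs h
    nlinarith [abs_nonneg x, sq_abs x]

private lemma sum_abs_le_sum_sq (s : Finset ℕ) (d : ℕ → ℤ) :
    |∑ i ∈ s, d i| ≤ ∑ i ∈ s, (d i) ^ 2 :=
  le_trans (Finset.abs_sum_le_sum_abs d s) (Finset.sum_le_sum fun i _ => abs_le_sq (d i))

/-- Telescoping: the sum of consecutive differences is `C 1`. -/
lemma tel (n : ℕ) (c : Fin (n + 1) → ℤ) :
    (∑ i ∈ Finset.range n, (ext n c (i + 1) - ext n c (i + 2))) = ext n c 1 := by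
  have h := Finset.sum_range_sub' (fun i => ext n c (i + 1)) n
  rw [ext_ge n c (n + 1) (by omega)] at h
  norm_num at h
  convert h using 2 <;> norm_num

/-- Classification of norm-3 vectors pairing `-2` with `x₀`. -/
lemma classify3 (n : ℕ) (a : ℕ → ℤ) (hn : 1 ≤ n)
    (ha : ∀ i, 1 ≤ i → i ≤ n → 2 ≤ a i) (ha1 : 3 ≤ a 1)
    (c : Fin (n + 1) → ℤ) (hQ : CForm n a c c = 3)
    (hP : 4 * ext n c 0 - 2 * ext n c 1 = -2) :
    a 1 = 3 ∧ ∃ r : ℕ, 1 ≤ r ∧ r ≤ n ∧ (∀ i, 2 ≤ i → i ≤ r → a i = 2) ∧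
      ((ext n c 0 = 0 ∧ ∀ j, 1 ≤ j → ext n c j = if j ≤ r then 1 else 0) ∨
       (ext n c 0 = -1 ∧ ∀ j, 1 ≤ j → ext n c j = if j ≤ r then -1 else 0)) := by
  have hq := CForm_self n a hn c
  rw [hQ] at hq
  set C := ext n c with hCdef
  have hC1 : C 1 = 2 * C 0 + 1 := by omega
  have h2C : (2 * C 0 - C 1) ^ 2 = 1 := by rw [hC1]; ring
  have hT2pt : ∀ i ∈ Finset.range n, 0 ≤ (a (i + 1) - if i = 0 then 3 else 2) * C (i + 1) ^ 2 := by
    intro i hi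
    have hi' := Finset.mem_range.mp hi
    by_cases h : i = 0
    · subst h
      norm_num
      nlinarith [sq_nonneg (C 1), ha1]
    · have h2 : 2 ≤ a (i + 1) := ha (i + 1) (by omega) (by omega)
      rw [if_neg h]
      have := sq_nonneg (C (i + 1))
      nlinarith
  set T2 := ∑ i ∈ Finset.range n, (a (i + 1) - if i = 0 then 3 else 2) * C (i + 1) ^ 2 with hT2def
  set T4 := ∑ i ∈ Finset.range n, (C (i + 1) - C (i + 2)) ^ 2 with hT4def
  have hT2nn : 0 ≤ T2 := Finset.sum_nonneg hT2pt
  have htel : (∑ i ∈ Finset.range n, (C (i + 1) - C (i + 2))) = C 1 := tel n c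
  have hT4ge : |C 1| ≤ T4 := by
    rw [← htel]
    exact sum_abs_le_sum_sq _ _
  have hconsec : 0 ≤ C 0 * (C 0 + 1) := by
    rcases le_or_gt 0 (C 0) with h | h
    · nlinarith
    · nlinarith
  have hC1sq : 1 ≤ C 1 ^ 2 := by rw [hC1]; nlinarith [hconsec]
  have hC1ne : C 1 ≠ 0 := by omega
  have hT4ge1 : 1 ≤ T4 := le_trans (Int.one_le_abs hC1ne) hT4ge
  rw [h2C] at hq
  have hC1sq1 : C 1 ^ 2 = 1 := by nlinarith
  have hT41 : T4 = 1 := by nlinarith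
  have hT20 : T2 = 0 := by omega
  have hC0 : C 0 = 0 ∨ C 0 = -1 := by
    have hsq' : (2 * C 0 + 1) ^ 2 = 1 := by rw [← hC1]; exact hC1sq1
    have hexp : (2 * C 0 + 1) ^ 2 = 4 * (C 0 * (C 0 + 1)) + 1 := by ring
    have h : C 0 * (C 0 + 1) = 0 := by linarith
    rcases mul_eq_zero.mp h with h | h
    · exact Or.inl h
    · exact Or.inr (by omega)
  obtain ⟨i0, hi0, hz⟩ :
      ∃ i0 ∈ Finset.range n, (∀ j ∈ Finset.range n, j ≠ i0 → C (j + 1) - C (j + 2) = 0) := by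
    have hne : (∑ i ∈ Finset.range n, (C (i + 1) - C (i + 2)) ^ 2) ≠ 0 := by
      rw [← hT4def]; omega
    obtain ⟨i0, hi0, hd⟩ := Finset.exists_ne_zero_of_sum_ne_zero hne
    refine ⟨i0, hi0, ?_⟩
    have hd1 : 1 ≤ (C (i0 + 1) - C (i0 + 2)) ^ 2 := by
      have := sq_nonneg (C (i0 + 1) - C (i0 + 2)); omega
    have herase := Finset.add_sum_erase (Finset.range n)
      (fun i => (C (i + 1) - C (i + 2)) ^ 2) hi0
    have hepos : 0 ≤ ∑ j ∈ (Finset.range n).erase i0, (C (j + 1) - C (j + 2)) ^ 2 :=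
      Finset.sum_nonneg fun j _ => sq_nonneg _
    have hzero : ∀ j ∈ (Finset.range n).erase i0, (C (j + 1) - C (j + 2)) ^ 2 = 0 := by
      rw [← Finset.sum_eq_zero_iff_of_nonneg (fun j _ => sq_nonneg _)]
      have hsum : (∑ i ∈ Finset.range n, (C (i + 1) - C (i + 2)) ^ 2) = 1 := by
        rw [← hT4def]; omega
      rw [hsum] at herase
      beta_reduce at herase
      omega
    intro j hj hne'
    have := hzero j (Finset.mem_erase.mpr ⟨hne', hj⟩)
    exact sub_eq_zero.mp (sq_eq_zero_iff.mp this) |>.symm ▸ (by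
      have h0 := sq_eq_zero_iff.mp this
      omega)
  have hi0n : i0 < n := Finset.mem_range.mp hi0
  have hstep : C (i0 + 1) - C (i0 + 2) = C 1 := by
    rw [← htel]
    exact (Finset.sum_eq_single_of_mem i0 hi0 (fun j hj hne => hz j hj hne)).symm
  have hA : ∀ jj : ℕ, jj + 1 ≤ i0 + 1 → C (jj + 1) = C 1 := by
    intro jj
    induction jj with
    | zero => intro _; rfl
    | succ k ih =>
      intro hk
      have h1 : C (k + 1) = C 1 := ih (by omega)
      have h0 : C (k + 1) - C (k + 2) = 0 := hz k (Finset.mem_range.mpr (by omega)) (by omega)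
      show C (k + 2) = C 1
      omega
  have hB : ∀ jj : ℕ, i0 + 1 ≤ jj → jj ≤ n → C (jj + 1) = 0 := by
    intro jj hjj
    induction jj, hjj using Nat.le_induction with
    | base =>
      intro _
      have h1 : C (i0 + 1) = C 1 := hA i0 le_rfl
      show C (i0 + 2) = 0
      omega
    | succ m hm ih =>
      intro hmn
      have h0 : C (m + 1) - C (m + 2) = 0 := hz m (Finset.mem_range.mpr (by omega)) (by omega)
      have h1 : C (m + 1) = 0 := ih (by omega)
      show C (m + 2) = 0
      omega
  have hshape : ∀ j, 1 ≤ j → C j = if j ≤ i0 + 1 then C 1 else 0 := by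
    intro j hj
    obtain ⟨jj, rfl⟩ : ∃ jj, j = jj + 1 := ⟨j - 1, by omega⟩
    by_cases hle : jj + 1 ≤ i0 + 1
    · rw [if_pos hle]; exact hA jj hle
    · rw [if_neg hle]
      by_cases hn2 : jj ≤ n
      · exact hB jj (by omega) hn2
      · rw [hCdef]; exact ext_ge n c (jj + 1) (by omega)
  have hz2 : ∀ i ∈ Finset.range n, (a (i + 1) - if i = 0 then 3 else 2) * C (i + 1) ^ 2 = 0 :=
    (Finset.sum_eq_zero_iff_of_nonneg hT2pt).mp (by rw [← hT2def]; exact hT20)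
  have ha1eq : a 1 = 3 := by
    have h := hz2 0 (Finset.mem_range.mpr (by omega))
    norm_num at h
    rcases h with h | h
    · omega
    · omega
  have ha2r : ∀ i, 2 ≤ i → i ≤ i0 + 1 → a i = 2 := by
    intro i h2 hr
    have hmem : i - 1 ∈ Finset.range n := Finset.mem_range.mpr (by omega)
    have h := hz2 (i - 1) hmem
    rw [if_neg (by omega)] at h
    have hidx : i - 1 + 1 = i := by omega
    rw [hidx] at h
    have hci : C i = C 1 := by
      have h3 := hshape i (by omega); rw [if_pos hr] at h3; exact h3
    rw [hci, hC1sq1, mul_one] at h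
    omega
  refine ⟨ha1eq, i0 + 1, by omega, by omega, ha2r, ?_⟩
  rcases hC0 with h0 | h0
  · left
    refine ⟨h0, fun j hj => ?_⟩
    rw [hshape j hj, show C 1 = 1 by omega]
  · right
    refine ⟨h0, fun j hj => ?_⟩
    rw [hshape j hj, show C 1 = -1 by omega]

/-! ### dot product tools -/

lemma mem_perp_iff {m : ℕ} (σ v : Fin m → ℤ) : v ∈ perp σ ↔ dotF v σ = 0 := Iff.rfl

lemma dotF_comm {m : ℕ} (v w : Fin m → ℤ) : dotF v w = dotF w v := by
  unfold dotF; apply Finset.sum_congr rfl; intro i _; ring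

lemma dotF_add_left {m : ℕ} (u v w : Fin m → ℤ) :
    dotF (u + v) w = dotF u w + dotF v w := by
  unfold dotF
  rw [← Finset.sum_add_distrib]
  apply Finset.sum_congr rfl; intro i _
  simp [Pi.add_apply]; ring

lemma dotF_neg_left {m : ℕ} (u w : Fin m → ℤ) : dotF (-u) w = -dotF u w := by
  unfold dotF
  rw [← Finset.sum_neg_distrib]
  apply Finset.sum_congr rfl; intro i _
  simp [Pi.neg_apply]

lemma dotF_sub_left {m : ℕ} (u v w : Fin m → ℤ) :
    dotF (u - v) w = dotF u w - dotF v w := by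
  rw [sub_eq_add_neg, dotF_add_left, dotF_neg_left, sub_eq_add_neg]

lemma dotF_add_right {m : ℕ} (w u v : Fin m → ℤ) :
    dotF w (u + v) = dotF w u + dotF w v := by
  rw [dotF_comm, dotF_add_left, dotF_comm u w, dotF_comm v w]

lemma dotF_neg_right {m : ℕ} (w u : Fin m → ℤ) : dotF w (-u) = -dotF w u := by
  rw [dotF_comm, dotF_neg_left, dotF_comm u w]

lemma dotF_sub_right {m : ℕ} (w u v : Fin m → ℤ) :
    dotF w (u - v) = dotF w u - dotF w v := by
  rw [dotF_comm, dotF_sub_left, dotF_comm u w, dotF_comm v w]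

lemma dotF_single {m : ℕ} (l : Fin m) (x : ℤ) (w : Fin m → ℤ) :
    dotF (Pi.single l x) w = x * w l := by
  unfold dotF
  rw [Finset.sum_eq_single l]
  · rw [Pi.single_eq_same]
  · intro b _ hb; rw [Pi.single_eq_of_ne hb]; ring
  · intro h; exact absurd (Finset.mem_univ l) h

/-- dot product against a three-point vector. -/
lemma dotF_three {m : ℕ} (p q r : Fin m) (xp xq xr : ℤ) (w : Fin m → ℤ) :
    dotF (Pi.single p xp + Pi.single q xq + Pi.single r xr) w
      = xp * w p + xq * w q + xr * w r := by
  rw [dotF_add_left, dotF_add_left, dotF_single, dotF_single, dotF_single]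

/-- sums over `Finset.Iio` in `Fin (m+1)` as `ℕ`-range sums. -/
lemma sum_Iio_eq (m : ℕ) (σ : Fin (m + 1) → ℤ) (j : Fin (m + 1)) :
    ∑ i ∈ Finset.Iio j, σ i = ∑ l ∈ Finset.range (m + 1), (if l < j.val then ext m σ l else 0) := by
  have h1 : Finset.Iio j = Finset.univ.filter (fun i => i < j) := by
    ext i; simp
  rw [h1, Finset.sum_filter,
    ← Fin.sum_univ_eq_sum_range (fun l => if l < j.val then ext m σ l else 0) (m + 1)]
  apply Finset.sum_congr rfl
  intro i _
  by_cases h : i < j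
  · rw [if_pos h, if_pos (by exact h), ext_apply]
  · rw [if_neg h, if_neg (by exact h)]

lemma sum_trunc (M N : ℕ) (hNM : N ≤ M) (f : ℕ → ℤ) :
    (∑ l ∈ Finset.range M, (if l < N then f l else 0)) = ∑ l ∈ Finset.range N, f l := by
  rw [← Finset.sum_subset (Finset.range_subset_range.mpr hNM)
    (fun x _ hx => by rw [if_neg (by simpa [Finset.mem_range] using hx)])]
  apply Finset.sum_congr rfl
  intro l hl
  rw [if_pos (Finset.mem_range.mp hl)]

lemma sum_univ_eq (m : ℕ) (σ : Fin (m + 1) → ℤ) :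
    ∑ i, σ i = ∑ l ∈ Finset.range (m + 1), ext m σ l := by
  rw [← Fin.sum_univ_eq_sum_range (fun l => ext m σ l) (m + 1)]
  apply Finset.sum_congr rfl
  intro i _
  rw [ext_apply]

/-- Changemaker bound: `σ j ≤ 1 + σ 0 + ⋯ + σ (j-1)`. -/
lemma cm_bound {m : ℕ} (σ : Fin m → ℤ) (hσ : IsChangemaker m σ) (j : Fin m) :
    σ j ≤ 1 + ∑ i ∈ Finset.Iio j, σ i := by
  by_contra hcon
  push_neg at hcon
  have hnn := hσ.2.1
  have hs0 : 0 ≤ ∑ i ∈ Finset.Iio j, σ i := Finset.sum_nonneg fun i _ => hnn i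
  have hins : (∑ i ∈ insert j (Finset.Iio j), σ i) ≤ ∑ i, σ i := by
    apply Finset.sum_le_sum_of_subset_of_nonneg (Finset.subset_univ _)
    intro i _ _; exact hnn i
  rw [Finset.sum_insert (by simp)] at hins
  obtain ⟨S, hS⟩ := hσ.2.2 (1 + ∑ i ∈ Finset.Iio j, σ i) (by omega) (by omega)
  by_cases hsub : ∀ l ∈ S, l < j
  · have : (∑ i ∈ S, σ i) ≤ ∑ i ∈ Finset.Iio j, σ i := by
      apply Finset.sum_le_sum_of_subset_of_nonneg
      · intro l hl; exact Finset.mem_Iio.mpr (hsub l hl)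
      · intro i _ _; exact hnn i
    omega
  · push_neg at hsub
    obtain ⟨l, hlS, hlj⟩ := hsub
    have h1 : σ j ≤ σ l := hσ.1 hlj
    have h2 : σ l ≤ ∑ i ∈ S, σ i := Finset.single_le_sum (fun i _ => hnn i) hlS
    omega

/-- positivity of squares of odd numbers -/
lemma odd_sq_ge_one (x : ℤ) : 1 ≤ (2 * x + 1) ^ 2 := by
  rcases le_or_gt 0 x with h | h
  · nlinarith
  · nlinarith

lemma CForm_add_right (n : ℕ) (a : ℕ → ℤ) (v w u : Fin (n + 1) → ℤ) :
    CForm n a v (w + u) = CForm n a v w + CForm n a v u := by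
  unfold CForm
  rw [← Finset.sum_add_distrib]
  apply Finset.sum_congr rfl; intro i _
  rw [← Finset.sum_add_distrib]
  apply Finset.sum_congr rfl; intro j _
  simp only [Pi.add_apply]; ring

lemma CForm_neg_right (n : ℕ) (a : ℕ → ℤ) (v w : Fin (n + 1) → ℤ) :
    CForm n a v (-w) = -CForm n a v w := by
  unfold CForm
  rw [← Finset.sum_neg_distrib]
  apply Finset.sum_congr rfl; intro i _
  rw [← Finset.sum_neg_distrib]
  apply Finset.sum_congr rfl; intro j _
  simp only [Pi.neg_apply]; ring

lemma CForm_sub_right (n : ℕ) (a : ℕ → ℤ) (v w u : Fin (n + 1) → ℤ) :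
    CForm n a v (w - u) = CForm n a v w - CForm n a v u := by
  rw [sub_eq_add_neg, CForm_add_right, CForm_neg_right, sub_eq_add_neg]

lemma T2_nonneg (n : ℕ) (a : ℕ → ℤ) (ha : ∀ i, 1 ≤ i → i ≤ n → 2 ≤ a i) (ha1 : 3 ≤ a 1)
    (c : Fin (n + 1) → ℤ) :
    0 ≤ ∑ i ∈ Finset.range n, (a (i + 1) - if i = 0 then 3 else 2) * (ext n c (i + 1)) ^ 2 := by
  apply Finset.sum_nonneg
  intro i hi
  have hi' := Finset.mem_range.mp hi
  by_cases h : i = 0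
  · subst h
    norm_num
    nlinarith [sq_nonneg (ext n c 1), ha1]
  · have h2 : 2 ≤ a (i + 1) := ha (i + 1) (by omega) (by omega)
    rw [if_neg h]
    nlinarith [sq_nonneg (ext n c (i + 1))]

/-- `classify3`, with the conclusion packaged as equality of vectors. -/
lemma shape_cases (n : ℕ) (a : ℕ → ℤ) (hn : 1 ≤ n)
    (ha : ∀ i, 1 ≤ i → i ≤ n → 2 ≤ a i) (ha1 : 3 ≤ a 1)
    (c : Fin (n + 1) → ℤ) (hQ : CForm n a c c = 3)
    (hP : 4 * ext n c 0 - 2 * ext n c 1 = -2) :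
    a 1 = 3 ∧ ∃ r : ℕ, 1 ≤ r ∧ r ≤ n ∧ (∀ i, 2 ≤ i → i ≤ r → a i = 2) ∧
      (c = intVec n 1 r ∨ c = -intVec n 1 r - Pi.single 0 1) := by
  obtain ⟨ha1', r, hr1, hrn, ha2, hsh⟩ := classify3 n a hn ha ha1 c hQ hP
  refine ⟨ha1', r, hr1, hrn, ha2, ?_⟩
  rcases hsh with ⟨h0, hs⟩ | ⟨h0, hs⟩
  · left
    funext l
    have hc : c l = ext n c l.val := (ext_apply n c l).symm
    rcases Nat.eq_zero_or_pos l.val with hl | hl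
    · rw [hc, hl, h0]
      simp only [intVec]
      rw [if_neg (by omega)]
    · rw [hc, hs l.val hl]
      simp only [intVec]
      split_ifs <;> first | rfl | omega
  · right
    funext l
    have hc : c l = ext n c l.val := (ext_apply n c l).symm
    have hr : ((-intVec n 1 r - Pi.single 0 1 : Fin (n + 1) → ℤ)) l
        = -(if 1 ≤ l.val ∧ l.val ≤ r then (1:ℤ) else 0) - (if l.val = 0 then 1 else 0) := by
      simp only [Pi.sub_apply, Pi.neg_apply, intVec, Pi.single_apply]
      congr 1
      by_cases h : l = 0
      · rw [if_pos h, if_pos (by simp [h])]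
      · rw [if_neg h, if_neg (show ¬ (l : ℕ) = 0 from fun h' => h (Fin.ext h'))]
    rw [hc, hr]
    rcases Nat.eq_zero_or_pos l.val with hl | hl
    · rw [hl, h0]
      norm_num
    · rw [hs l.val hl]
      split_ifs <;> first | rfl | omega | norm_num

lemma ext_negB (n r : ℕ) (hr : r ≤ n) (j : ℕ) :
    ext n (-intVec n 1 r - Pi.single 0 1) j
      = -(if 1 ≤ j ∧ j ≤ r then (1:ℤ) else 0) - (if j = 0 then 1 else 0) := by
  by_cases h : j < n + 1
  · rw [ext_lt n _ j h]
    simp only [Pi.sub_apply, Pi.neg_apply, intVec, Pi.single_apply]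
    congr 1
    by_cases h0 : j = 0
    · rw [if_pos (by simp [Fin.ext_iff, h0]), if_pos h0]
    · rw [if_neg (by simp [Fin.ext_iff, h0]), if_neg h0]
  · rw [ext_ge _ _ _ (by omega), if_neg (by omega), if_neg (by omega)]
    norm_num

set_option maxHeartbeats 1600000 in
/-- Proposition 5.1: if `k_1 = 1` and `k_2 > 2`, then
`x_0 = e_0 + e_1 + e_{k_2} - e_{k_3}`, `k_3 = k_2 + 1`, and the initial segment of `σ`
is `(1, 1, 2, …, 2, σ_{k_2}, σ_{k_2} + 2)` with `s = k_2 - 2 ≥ 1` twos. -/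
theorem statement17
    (n : ℕ) (aa : ℕ → ℤ) (hC : CTypeParams n aa)
    (σ : Fin (n + 2) → ℤ) (hσ : IsChangemaker (n + 2) σ)
    (φ : (Fin (n + 1) → ℤ) ≃ₗ[ℤ] perp σ)
    (hφ : ∀ v w : Fin (n + 1) → ℤ,
      CForm n aa v w = dotF (φ v : Fin (n + 2) → ℤ) (φ w : Fin (n + 2) → ℤ))
    (k₁ k₂ k₃ : Fin (n + 2)) (hk₁ : 0 < k₁) (hk₁₂ : k₁ < k₂) (hk₂₃ : k₂ < k₃)
    (hx0 : (φ (Pi.single 0 1) : Fin (n + 2) → ℤ) =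
        Pi.single 0 1 + Pi.single k₁ 1 + Pi.single k₂ 1 - Pi.single k₃ 1 ∨
      (φ (Pi.single 0 1) : Fin (n + 2) → ℤ) =
        Pi.single 0 1 - Pi.single k₁ 1 - Pi.single k₂ 1 + Pi.single k₃ 1)
    (hk₁1 : (k₁ : ℕ) = 1) (hk₂2 : 2 < (k₂ : ℕ)) :
    (φ (Pi.single 0 1) : Fin (n + 2) → ℤ) =
        Pi.single 0 1 + Pi.single k₁ 1 + Pi.single k₂ 1 - Pi.single k₃ 1 ∧
    (k₃ : ℕ) = (k₂ : ℕ) + 1 ∧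
    σ 0 = 1 ∧ σ 1 = 1 ∧
    (∀ i : Fin (n + 2), 2 ≤ (i : ℕ) → (i : ℕ) < (k₂ : ℕ) → σ i = 2) ∧
    σ k₃ = σ k₂ + 2 := by
  obtain ⟨hn, ha, ha1⟩ := hC
  have hk3lt : (k₃ : ℕ) < n + 2 := k₃.isLt
  have hk23 : (k₂ : ℕ) < (k₃ : ℕ) := hk₂₃
  have hk12 : 1 < (k₂ : ℕ) := by
    have h := hk₁₂
    rw [Fin.lt_def, hk₁1] at h
    exact h
  have vne : ∀ p q : Fin (n + 2), p.val ≠ q.val → p ≠ q :=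
    fun p q h hpq => h (congrArg Fin.val hpq)
  set X0 : Fin (n + 2) → ℤ := (φ (Pi.single 0 1) : Fin (n + 2) → ℤ) with hX0def
  have hX0perp : X0 ∈ perp σ := by rw [hX0def]; exact (φ (Pi.single 0 1)).2
  have transfer : ∀ w : Fin (n + 2) → ℤ, w ∈ perp σ →
      ∃ c : Fin (n + 1) → ℤ, (φ c : Fin (n + 2) → ℤ) = w ∧
        CForm n aa c c = dotF w w ∧ 4 * ext n c 0 - 2 * ext n c 1 = dotF w X0 := by
    intro w hw
    obtain ⟨c, hc⟩ : ∃ c : Fin (n + 1) → ℤ, (φ c : Fin (n + 2) → ℤ) = w :=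
      ⟨φ.symm ⟨w, hw⟩, by rw [LinearEquiv.apply_symm_apply]⟩
    refine ⟨c, hc, ?_, ?_⟩
    · rw [hφ c c, hc]
    · rw [← CForm_single0 n aa hn c, hφ c (Pi.single 0 1), hc, ← hX0def]
  have hPar : ∀ w : Fin (n + 2) → ℤ, w ∈ perp σ → ∃ t : ℤ, dotF w X0 = 2 * t := by
    intro w hw
    obtain ⟨c, _, _, hp⟩ := transfer w hw
    exact ⟨2 * ext n c 0 - ext n c 1, by omega⟩
  have hNormP : ∀ w : Fin (n + 2) → ℤ, w ∈ perp σ → dotF w w ≤ 2 → dotF w X0 = 0 := by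
    intro w hw hle
    obtain ⟨c, hc, hQ, hp⟩ := transfer w hw
    have hq := CForm_self n aa hn c
    rw [hQ] at hq
    have hT2 := T2_nonneg n aa ha ha1 c
    have htel := tel n c
    have hT4 : |ext n c 1| ≤ ∑ i ∈ Finset.range n, (ext n c (i + 1) - ext n c (i + 2)) ^ 2 := by
      rw [← htel]
      exact sum_abs_le_sum_sq _ _
    have hT4nn : 0 ≤ ∑ i ∈ Finset.range n, (ext n c (i + 1) - ext n c (i + 2)) ^ 2 :=
      Finset.sum_nonneg fun i _ => sq_nonneg _
    have hsq0 := sq_nonneg (2 * ext n c 0 - ext n c 1)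
    by_cases h1 : ext n c 1 = 0
    · have hc1sq : ext n c 1 ^ 2 = 0 := by rw [h1]; ring
      have he : (2 * ext n c 0 - ext n c 1) ^ 2 = 4 * ext n c 0 ^ 2 := by rw [h1]; ring
      have hT4abs : 0 ≤ |ext n c 1| := abs_nonneg _
      have h4 : ext n c 0 = 0 := by
        rcases eq_or_ne (ext n c 0) 0 with h | h
        · exact h
        · exfalso
          have h5 : 1 ≤ ext n c 0 ^ 2 := le_trans (Int.one_le_abs h) (abs_le_sq _)
          linarith
      omega
    · exfalso
      have habs1 : 1 ≤ |ext n c 1| := Int.one_le_abs h1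
      have hsqa : |ext n c 1| ^ 2 = ext n c 1 ^ 2 := sq_abs _
      have hule : |ext n c 1| ≤ 1 := by nlinarith
      have h2 : ext n c 1 = 1 ∨ ext n c 1 = -1 := by
        have := abs_le.mp hule
        omega
      have hC1sq : ext n c 1 ^ 2 = 1 := by rcases h2 with h | h <;> rw [h] <;> norm_num
      have hT4ge1 : (1 : ℤ) ≤ ∑ i ∈ Finset.range n, (ext n c (i + 1) - ext n c (i + 2)) ^ 2 :=
        le_trans habs1 hT4
      have hsq0le : (2 * ext n c 0 - ext n c 1) ^ 2 ≤ 0 := by linarith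
      have h6 : 2 * ext n c 0 - ext n c 1 = 0 := by
        have hnn2 := sq_nonneg (2 * ext n c 0 - ext n c 1)
        have h0 : (2 * ext n c 0 - ext n c 1) ^ 2 = 0 := le_antisymm hsq0le hnn2
        exact sq_eq_zero_iff.mp h0
      omega
  obtain ⟨s0, hforms, hX0dot⟩ : ∃ s0 : ℤ,
      ((s0 = 1 ∧ X0 = Pi.single 0 1 + Pi.single k₁ 1 + Pi.single k₂ 1 - Pi.single k₃ 1) ∨
        (s0 = -1 ∧ X0 = Pi.single 0 1 - Pi.single k₁ 1 - Pi.single k₂ 1 + Pi.single k₃ 1)) ∧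
      ∀ w : Fin (n + 2) → ℤ, dotF X0 w = w 0 + s0 * (w k₁ + w k₂ - w k₃) := by
    rcases hx0 with h | h
    · refine ⟨1, Or.inl ⟨rfl, by rw [hX0def]; exact h⟩, fun w => ?_⟩
      rw [h, dotF_sub_left, dotF_add_left, dotF_add_left,
        dotF_single, dotF_single, dotF_single, dotF_single]
      ring
    · refine ⟨-1, Or.inr ⟨rfl, by rw [hX0def]; exact h⟩, fun w => ?_⟩
      rw [h, dotF_add_left, dotF_sub_left, dotF_sub_left,
        dotF_single, dotF_single, dotF_single, dotF_single]
      ring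
  have hs0sq : s0 = 1 ∨ s0 = -1 := by
    rcases hforms with ⟨h, _⟩ | ⟨h, _⟩
    · exact Or.inl h
    · exact Or.inr h
  have hX0v : ∀ l : Fin (n + 2), X0 l =
      (if (0 : Fin (n + 2)) = l then 1 else 0)
        + s0 * ((if k₁ = l then 1 else 0) + (if k₂ = l then 1 else 0)
          - (if k₃ = l then 1 else 0)) := by
    intro l
    have h2 : X0 l = dotF X0 (Pi.single l 1) := by
      rw [dotF_comm, dotF_single, one_mul]
    rw [h2, hX0dot (Pi.single l 1)]
    simp only [Pi.single_apply]
  have hX00 : X0 0 = 1 := by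
    rw [hX0v 0, if_pos rfl, if_neg (vne _ _ (by simp only [Fin.val_zero]; omega)),
      if_neg (vne _ _ (by simp only [Fin.val_zero]; omega)),
      if_neg (vne _ _ (by simp only [Fin.val_zero]; omega))]
    ring
  have hX0k1 : X0 k₁ = s0 := by
    rw [hX0v k₁, if_neg (vne _ _ (by simp only [Fin.val_zero]; omega)), if_pos rfl,
      if_neg (vne _ _ (by omega)), if_neg (vne _ _ (by omega))]
    ring
  have hX0k2 : X0 k₂ = s0 := by
    rw [hX0v k₂, if_neg (vne _ _ (by simp only [Fin.val_zero]; omega)),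
      if_neg (vne _ _ (by omega)), if_pos rfl, if_neg (vne _ _ (by omega))]
    ring
  have hX0k3 : X0 k₃ = -s0 := by
    rw [hX0v k₃, if_neg (vne _ _ (by simp only [Fin.val_zero]; omega)),
      if_neg (vne _ _ (by omega)), if_neg (vne _ _ (by omega)), if_pos rfl]
    ring
  have hX0other : ∀ l : Fin (n + 2),
      l.val ≠ 0 → l.val ≠ 1 → l.val ≠ k₂.val → l.val ≠ k₃.val → X0 l = 0 := by
    intro l h0 h1 h2 h3
    rw [hX0v l, if_neg (vne _ _ (by simp only [Fin.val_zero]; omega)),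
      if_neg (vne _ _ (by omega)), if_neg (vne _ _ (by omega)), if_neg (vne _ _ (by omega))]
    ring
  have hparval : ∀ i j : Fin (n + 2), ∃ t : ℤ, σ j * X0 i - σ i * X0 j = 2 * t := by
    intro i j
    have hmem : (Pi.single i (σ j) - Pi.single j (σ i)) ∈ perp σ := by
      rw [mem_perp_iff, dotF_sub_left, dotF_single, dotF_single]; ring
    obtain ⟨t, ht⟩ := hPar _ hmem
    rw [dotF_sub_left, dotF_single, dotF_single] at ht
    exact ⟨t, ht⟩
  have hpar_other : ∀ j : Fin (n + 2),
      j.val ≠ 0 → j.val ≠ 1 → j.val ≠ k₂.val → j.val ≠ k₃.val → ∃ t : ℤ, σ j = 2 * t := by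
    intro j h0 h1 h2 h3
    obtain ⟨t, ht⟩ := hparval 0 j
    rw [hX00, hX0other j h0 h1 h2 h3] at ht
    exact ⟨t, by omega⟩
  have hpar_k : ∀ j : Fin (n + 2), X0 j = s0 ∨ X0 j = -s0 → ∃ t : ℤ, σ j + σ 0 = 2 * t := by
    intro j hj
    obtain ⟨t, ht⟩ := hparval 0 j
    rw [hX00] at ht
    rcases hs0sq with h | h <;> rcases hj with hj | hj <;> rw [hj, h] at ht
    · exact ⟨t + σ 0, by omega⟩
    · exact ⟨t, by omega⟩
    · exact ⟨t, by omega⟩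
    · exact ⟨t + σ 0, by omega⟩
  have hnn : ∀ i, 0 ≤ σ i := hσ.2.1
  have hσ0 : σ 0 = 1 := by
    have hodd : ¬ ∃ t : ℤ, σ 0 = 2 * t := by
      rintro ⟨t0, ht0⟩
      have hallev : ∀ j : Fin (n + 2), ∃ t : ℤ, σ j = 2 * t := by
        intro j
        by_cases h0 : j.val = 0
        · have hj : j = 0 := Fin.ext (by simp only [Fin.val_zero]; omega)
          exact ⟨t0, by rw [hj]; exact ht0⟩
        · by_cases h1 : j.val = 1
          · have hj : j = k₁ := Fin.ext (by omega)
            obtain ⟨t, ht⟩ := hpar_k k₁ (Or.inl hX0k1)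
            exact ⟨t - t0, by rw [hj]; omega⟩
          · by_cases h2 : j.val = k₂.val
            · have hj : j = k₂ := Fin.ext h2
              obtain ⟨t, ht⟩ := hpar_k k₂ (Or.inl hX0k2)
              exact ⟨t - t0, by rw [hj]; omega⟩
            · by_cases h3 : j.val = k₃.val
              · have hj : j = k₃ := Fin.ext h3
                obtain ⟨t, ht⟩ := hpar_k k₃ (Or.inr hX0k3)
                exact ⟨t - t0, by rw [hj]; omega⟩
              · exact hpar_other j h0 h1 h2 h3
      have hsum0 : 0 ≤ ∑ i, σ i := Finset.sum_nonneg fun i _ => hnn i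
      by_cases hz : ∑ i, σ i = 0
      · have hall0 : ∀ i ∈ Finset.univ, σ i = 0 :=
          (Finset.sum_eq_zero_iff_of_nonneg fun i _ => hnn i).mp hz
        have hperp : (Pi.single (0 : Fin (n + 2)) (1 : ℤ)) ∈ perp σ := by
          rw [mem_perp_iff, dotF_single, hall0 0 (Finset.mem_univ 0)]; ring
        obtain ⟨t, ht⟩ := hPar _ hperp
        rw [dotF_single, hX00] at ht
        omega
      · obtain ⟨S, hS⟩ := hσ.2.2 1 (by norm_num) (by omega)
        have hev : Even (∑ i ∈ S, σ i) :=
          Finset.even_sum _ fun i _ => by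
            obtain ⟨t, ht⟩ := hallev i
            exact ⟨t, by omega⟩
        rw [← hS] at hev
        exact (by norm_num : ¬ Even (1 : ℤ)) hev
    have h01 : 1 ≤ σ 0 := by
      rcases lt_or_ge (σ 0) 1 with h | h
      · exact absurd ⟨0, by have := hnn 0; omega⟩ hodd
      · exact h
    have h0le : σ 0 ≤ 1 := by
      by_contra hc
      push_neg at hc
      have hle : σ 0 ≤ ∑ i, σ i := Finset.single_le_sum (fun i _ => hnn i) (Finset.mem_univ 0)
      obtain ⟨S, hS⟩ := hσ.2.2 1 (by norm_num) (by omega)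
      rcases S.eq_empty_or_nonempty with he | ⟨l, hl⟩
      · rw [he] at hS; simp at hS
      · have h1 : σ 0 ≤ σ l := hσ.1 (Fin.zero_le l)
        have h2 : σ l ≤ ∑ i ∈ S, σ i := Finset.single_le_sum (fun i _ => hnn i) hl
        omega
    omega
  have hσk₁ : σ k₁ = 1 := by
    obtain ⟨t, ht⟩ := hpar_k k₁ (Or.inl hX0k1)
    have hb := cm_bound σ hσ k₁
    have hIio : ∑ i ∈ Finset.Iio k₁, σ i = σ 0 := by
      rw [sum_Iio_eq (n + 1) σ k₁, hk₁1, sum_trunc (n + 2) 1 (by omega) (ext (n + 1) σ),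
        Finset.sum_range_one]
      exact ext_apply (n + 1) σ 0
    have hm : σ 0 ≤ σ k₁ := hσ.1 (Fin.zero_le k₁)
    omega
  have hk1fin : k₁ = (1 : Fin (n + 2)) := Fin.ext (by rw [hk₁1, Fin.val_one])
  have hf2lt : 2 < n + 2 := by omega
  set f2 : Fin (n + 2) := ⟨2, hf2lt⟩ with hf2def
  have hf2v : (f2 : ℕ) = 2 := rfl
  have hσf2 : σ f2 = 2 := by
    obtain ⟨t, ht⟩ := hpar_other f2 (by omega) (by omega) (by omega) (by omega)
    have hb := cm_bound σ hσ f2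
    have hIio : ∑ i ∈ Finset.Iio f2, σ i = σ 0 + σ k₁ := by
      rw [sum_Iio_eq (n + 1) σ f2, hf2v, sum_trunc (n + 2) 2 (by omega) (ext (n + 1) σ),
        Finset.sum_range_succ, Finset.sum_range_one]
      have e0 : ext (n + 1) σ 0 = σ 0 := ext_apply (n + 1) σ 0
      have e1 : ext (n + 1) σ 1 = σ k₁ := by
        rw [ext_lt (n + 1) σ 1 (by omega)]
        exact congrArg σ (Fin.ext (by rw [hk₁1])).symm
      rw [e0, e1]
    have hm : σ k₁ ≤ σ f2 := hσ.1 (by rw [Fin.le_def, hk₁1, hf2v]; omega)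
    omega
  have hs0v : s0 = 1 := by
    by_contra hne1
    have hs0m : s0 = -1 := by
      rcases hs0sq with h | h
      · exact absurd h hne1
      · exact h
    have hk1ne0 : k₁ ≠ 0 := vne _ _ (by simp only [Fin.val_zero]; omega)
    have h0nek1 : (0 : Fin (n + 2)) ≠ k₁ := vne _ _ (by simp only [Fin.val_zero]; omega)
    have hwp : (Pi.single (0 : Fin (n + 2)) (1 : ℤ) - Pi.single k₁ 1) ∈ perp σ := by
      rw [mem_perp_iff, dotF_sub_left, dotF_single, dotF_single, hσ0, hσk₁]; ring
    have hw0 : ((Pi.single (0 : Fin (n + 2)) (1 : ℤ) - Pi.single k₁ 1 : Fin (n + 2) → ℤ)) 0 = 1 := by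
      rw [Pi.sub_apply, Pi.single_eq_same, Pi.single_eq_of_ne h0nek1]; ring
    have hwk1 : ((Pi.single (0 : Fin (n + 2)) (1 : ℤ) - Pi.single k₁ 1 : Fin (n + 2) → ℤ)) k₁ = -1 := by
      rw [Pi.sub_apply, Pi.single_eq_of_ne hk1ne0, Pi.single_eq_same]; ring
    have hww : dotF (Pi.single (0 : Fin (n + 2)) (1 : ℤ) - Pi.single k₁ 1)
        (Pi.single (0 : Fin (n + 2)) (1 : ℤ) - Pi.single k₁ 1) = 2 := by
      rw [dotF_sub_left, dotF_single, dotF_single, hw0, hwk1]; ring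
    have h0 := hNormP _ hwp (le_of_eq hww)
    rw [dotF_sub_left, dotF_single, dotF_single, hX00, hX0k1] at h0
    omega
  have hform1 : X0 = Pi.single 0 1 + Pi.single k₁ 1 + Pi.single k₂ 1 - Pi.single k₃ 1 := by
    rcases hforms with ⟨_, h⟩ | ⟨hs, _⟩
    · exact h
    · omega
  have hσk₃ : σ k₃ = σ k₂ + 2 := by
    have h := hX0perp
    rw [mem_perp_iff] at h
    rw [hX0dot σ, hσ0, hσk₁, hs0v] at h
    omega
  have hk2odd : ∃ t : ℤ, σ k₂ = 2 * t + 1 := by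
    obtain ⟨t, ht⟩ := hpar_k k₂ (Or.inl hX0k2)
    exact ⟨t - 1, by omega⟩
  have hmid : ∀ l : Fin (n + 2), k₂.val < l.val → l.val < k₃.val → σ l = σ k₂ + 1 := by
    intro l hl1 hl2
    obtain ⟨t, ht⟩ := hpar_other l (by omega) (by omega) (by omega) (by omega)
    have hm1 : σ k₂ ≤ σ l := hσ.1 (by rw [Fin.le_def]; omega)
    have hm2 : σ l ≤ σ k₃ := hσ.1 (by rw [Fin.le_def]; omega)
    obtain ⟨t2, ht2⟩ := hk2odd
    omega
  have trip : ∀ (p q r : Fin (n + 2)) (w : Fin (n + 2) → ℤ),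
      dotF (Pi.single p 1 + Pi.single q (-1) + Pi.single r (-1)) w = w p - w q - w r := by
    intro p q r w
    rw [dotF_three]; ring
  have evP1 : ∀ p q r : Fin (n + 2), p ≠ q → p ≠ r →
      ((Pi.single p (1 : ℤ) + Pi.single q (-1) + Pi.single r (-1) : Fin (n + 2) → ℤ)) p = 1 := by
    intro p q r h1 h2
    rw [Pi.add_apply, Pi.add_apply, Pi.single_eq_same,
      Pi.single_eq_of_ne h1, Pi.single_eq_of_ne h2]
    ring
  have evP2 : ∀ p q r : Fin (n + 2), q ≠ p → q ≠ r →
      ((Pi.single p (1 : ℤ) + Pi.single q (-1) + Pi.single r (-1) : Fin (n + 2) → ℤ)) q = -1 := by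
    intro p q r h1 h2
    rw [Pi.add_apply, Pi.add_apply, Pi.single_eq_of_ne h1, Pi.single_eq_same,
      Pi.single_eq_of_ne h2]
    ring
  have evP3 : ∀ p q r : Fin (n + 2), r ≠ p → r ≠ q →
      ((Pi.single p (1 : ℤ) + Pi.single q (-1) + Pi.single r (-1) : Fin (n + 2) → ℤ)) r = -1 := by
    intro p q r h1 h2
    rw [Pi.add_apply, Pi.add_apply, Pi.single_eq_of_ne h1, Pi.single_eq_of_ne h2,
      Pi.single_eq_same]
    ring
  have evP0 : ∀ p q r l : Fin (n + 2), l ≠ p → l ≠ q → l ≠ r →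
      ((Pi.single p (1 : ℤ) + Pi.single q (-1) + Pi.single r (-1) : Fin (n + 2) → ℤ)) l = 0 := by
    intro p q r l h1 h2 h3
    rw [Pi.add_apply, Pi.add_apply, Pi.single_eq_of_ne h1, Pi.single_eq_of_ne h2,
      Pi.single_eq_of_ne h3]
    ring
  have hK3 : (k₃ : ℕ) = (k₂ : ℕ) + 1 := by
    by_contra hK
    have hKlt : (k₂ : ℕ) + 1 < (k₃ : ℕ) := by omega
    have hfklt : (k₂ : ℕ) + 1 < n + 2 := by omega
    set fk : Fin (n + 2) := ⟨(k₂ : ℕ) + 1, hfklt⟩ with hfkdef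
    have hfkv : (fk : ℕ) = (k₂ : ℕ) + 1 := rfl
    have hσfk : σ fk = σ k₂ + 1 := hmid fk (by omega) (by omega)
    set y₂ : Fin (n + 2) → ℤ := Pi.single k₃ (1 : ℤ) + Pi.single k₂ (-1) + Pi.single f2 (-1)
      with hy2
    set w₁ : Fin (n + 2) → ℤ :=
      Pi.single fk (1 : ℤ) + Pi.single k₂ (-1) + Pi.single (0 : Fin (n + 2)) (-1) with hw1
    have hy2p : y₂ ∈ perp σ := by
      rw [mem_perp_iff, hy2, trip, hσk₃, hσf2]; ring
    have hy2Q : dotF y₂ y₂ = 3 := by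
      rw [hy2, trip,
        evP1 _ _ _ (vne _ _ (by omega)) (vne _ _ (by omega)),
        evP2 _ _ _ (vne _ _ (by omega)) (vne _ _ (by omega)),
        evP3 _ _ _ (vne _ _ (by omega)) (vne _ _ (by omega))]
      ring
    have hy2P : dotF y₂ X0 = -2 := by
      rw [hy2, trip, hX0k3, hX0k2, hX0other f2 (by omega) (by omega) (by omega) (by omega),
        hs0v]
      ring
    have hw1p : w₁ ∈ perp σ := by
      rw [mem_perp_iff, hw1, trip, hσfk, hσ0]; ring
    have hw1Q : dotF w₁ w₁ = 3 := by
      rw [hw1, trip,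
        evP1 _ _ _ (vne _ _ (by omega)) (vne _ _ (by simp only [Fin.val_zero]; omega)),
        evP2 _ _ _ (vne _ _ (by omega)) (vne _ _ (by simp only [Fin.val_zero]; omega)),
        evP3 _ _ _ (vne _ _ (by simp only [Fin.val_zero]; omega))
          (vne _ _ (by simp only [Fin.val_zero]; omega))]
      ring
    have hw1P : dotF w₁ X0 = -2 := by
      rw [hw1, trip, hX0other fk (by omega) (by omega) (by omega) (by omega), hX0k2, hX00,
        hs0v]
      ring
    have hdot11 : dotF w₁ y₂ = 1 := by
      rw [hw1, hy2, trip,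
        evP0 _ _ _ fk (vne _ _ (by omega)) (vne _ _ (by omega)) (vne _ _ (by omega)),
        evP2 _ _ _ (vne _ _ (by omega)) (vne _ _ (by omega)),
        evP0 _ _ _ 0 (vne _ _ (by simp only [Fin.val_zero]; omega))
          (vne _ _ (by simp only [Fin.val_zero]; omega))
          (vne _ _ (by simp only [Fin.val_zero]; omega))]
      ring
    obtain ⟨cy, hcy, hQy, hpy⟩ := transfer y₂ hy2p
    obtain ⟨cw, hcw, hQw, hpw⟩ := transfer w₁ hw1p
    obtain ⟨ha1', r, hr1, hrn, ha2', hsh⟩ := shape_cases n aa hn ha ha1 cy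
      (by rw [hQy, hy2Q]) (by rw [hpy, hy2P])
    have hwy : CForm n aa cw cy = 1 := by
      rw [hφ cw cy, hcw, hcy]; exact hdot11
    have h3 : CForm n aa cw (Pi.single 0 1) = -2 := by
      rw [hφ cw (Pi.single 0 1), hcw, ← hX0def]
      exact hw1P
    have hPAIR : CForm n aa cw (intVec n 1 r) = 1 := by
      rcases hsh with h | h
      · rw [← h]; exact hwy
      · rw [h, CForm_sub_right, CForm_neg_right] at hwy
        omega
    obtain ⟨_, rw', hrw1, hrwn, _, hshw⟩ := shape_cases n aa hn ha ha1 cw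
      (by rw [hQw, hw1Q]) (by rw [hpw, hw1P])
    rw [CForm_intVec n aa r hr1 hrn ha1' ha2' cw] at hPAIR
    rcases hshw with h | h
    · rw [h, ext_intVec n rw' hrwn 0, ext_intVec n rw' hrwn 1, ext_intVec n rw' hrwn r,
        ext_intVec n rw' hrwn (r + 1)] at hPAIR
      split_ifs at hPAIR <;> omega
    · rw [h, ext_negB n rw' hrwn 0, ext_negB n rw' hrwn 1, ext_negB n rw' hrwn r,
        ext_negB n rw' hrwn (r + 1)] at hPAIR
      split_ifs at hPAIR <;> omega
  have coePhi : ∀ c1 : Fin (n + 1) → ℤ, (φ (-c1 - Pi.single 0 1) : Fin (n + 2) → ℤ)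
      = -(φ c1 : Fin (n + 2) → ℤ) - X0 := by
    intro c1
    rw [map_sub, map_neg, hX0def]
    rfl
  have hE0 : ext (n + 1) σ 0 = σ 0 := ext_apply (n + 1) σ 0
  have hE1 : ext (n + 1) σ 1 = σ k₁ := by
    rw [ext_lt (n + 1) σ 1 (by omega)]
    exact congrArg σ (Fin.ext (by rw [hk₁1])).symm
  have h2s : ∀ ii : ℕ, 2 ≤ ii → ii < (k₂ : ℕ) → ext (n + 1) σ ii = 2 := by
    intro ii
    induction ii using Nat.strong_induction_on with
    | _ ii IH =>
      intro h2 hik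
      have hiilt : ii < n + 2 := by omega
      set fi : Fin (n + 2) := ⟨ii, hiilt⟩ with hfidef
      have hfiv : (fi : ℕ) = ii := rfl
      have hEii : ext (n + 1) σ ii = σ fi := ext_lt (n + 1) σ ii hiilt
      have hsum : ∀ L : ℕ, 2 ≤ L → L ≤ ii →
          (∑ l ∈ Finset.range L, ext (n + 1) σ l) = 2 * (L : ℤ) - 2 := by
        intro L hL2
        induction L, hL2 using Nat.le_induction with
        | base =>
          intro _
          rw [Finset.sum_range_succ, Finset.sum_range_one, hE0, hE1, hσ0, hσk₁]
          norm_num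
        | succ L hL IHL =>
          intro hLi
          rw [Finset.sum_range_succ, IHL (by omega), IH L (by omega) (by omega) (by omega)]
          push_cast
          ring
      obtain ⟨tt, htt⟩ := hpar_other fi (by omega) (by omega) (by omega) (by omega)
      have hb := cm_bound σ hσ fi
      have hIio : ∑ i ∈ Finset.Iio fi, σ i = 2 * (ii : ℤ) - 2 := by
        rw [sum_Iio_eq (n + 1) σ fi, hfiv, sum_trunc (n + 2) ii (by omega) (ext (n + 1) σ)]
        exact hsum ii h2 le_rfl
      have hmlow : σ f2 ≤ σ fi := hσ.1 (by rw [Fin.le_def, hf2v, hfiv]; omega)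
      by_cases ht1 : σ fi = 2
      · rw [hEii, ht1]
      exfalso
      have htt2 : 2 ≤ tt := by omega
      set tN : ℕ := tt.toNat with htNdef
      have htN : (tN : ℤ) = tt := Int.toNat_of_nonneg (by omega)
      have htN2 : 2 ≤ tN := by omega
      have htNii : tN + 1 ≤ ii := by omega
      set v : Fin (n + 2) → ℤ :=
        fun l => if l.val = ii then 1 else if l.val ≤ tN then -1 else 0 with hvdef
      have hvval : ∀ l : Fin (n + 2),
          v l = if l.val = ii then 1 else if l.val ≤ tN then -1 else 0 := fun l => rfl
      have hvperp : v ∈ perp σ := by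
        rw [mem_perp_iff]
        have hconv : dotF v σ = ∑ l ∈ Finset.range (n + 2),
            ((if l = ii then ext (n + 1) σ ii else 0)
              - (if l < tN + 1 then ext (n + 1) σ l else 0)) := by
          unfold dotF
          rw [← Fin.sum_univ_eq_sum_range (fun l => (if l = ii then ext (n + 1) σ ii else 0)
            - (if l < tN + 1 then ext (n + 1) σ l else 0)) (n + 2)]
          apply Finset.sum_congr rfl
          intro l _
          rw [hvval l, ← ext_apply (n + 1) σ l]
          by_cases hl1 : l.val = ii
          · simp only [if_pos hl1, hl1, if_true]
            rw [if_neg (by omega : ¬ ii < tN + 1)]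
            ring
          · simp only [if_neg hl1]
            by_cases hl2 : l.val ≤ tN
            · rw [if_pos hl2, if_pos (by omega : l.val < tN + 1)]
              ring
            · rw [if_neg hl2, if_neg (by omega : ¬ l.val < tN + 1)]
              ring
        rw [hconv, Finset.sum_sub_distrib,
          Finset.sum_ite_eq' (Finset.range (n + 2)) ii (fun _ => ext (n + 1) σ ii),
          if_pos (Finset.mem_range.mpr (by omega)),
          sum_trunc (n + 2) (tN + 1) (by omega) (ext (n + 1) σ),
          hsum (tN + 1) (by omega) (by omega), hEii]
        omega
      have hvnorm : dotF v v = (tN : ℤ) + 2 := by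
        have hconv : dotF v v = ∑ l ∈ Finset.range (n + 2),
            ((if l = ii then (1 : ℤ) else 0) + (if l < tN + 1 then 1 else 0)) := by
          unfold dotF
          rw [← Fin.sum_univ_eq_sum_range (fun l => (if l = ii then (1 : ℤ) else 0)
            + (if l < tN + 1 then 1 else 0)) (n + 2)]
          apply Finset.sum_congr rfl
          intro l _
          rw [hvval l]
          by_cases hl1 : l.val = ii
          · simp only [if_pos hl1, hl1, if_true]
            rw [if_neg (by omega : ¬ ii < tN + 1)]
            ring
          · simp only [if_neg hl1]
            by_cases hl2 : l.val ≤ tN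
            · rw [if_pos hl2, if_pos (by omega : l.val < tN + 1)]
              ring
            · rw [if_neg hl2, if_neg (by omega : ¬ l.val < tN + 1)]
              ring
        rw [hconv, Finset.sum_add_distrib,
          Finset.sum_ite_eq' (Finset.range (n + 2)) ii (fun _ => (1 : ℤ)),
          if_pos (Finset.mem_range.mpr (by omega)),
          sum_trunc (n + 2) (tN + 1) (by omega) (fun _ => (1 : ℤ)),
          Finset.sum_const, Finset.card_range, nsmul_eq_mul]
        push_cast
        ring
      have hv0 : v 0 = -1 := by
        rw [hvval 0, if_neg (by simp only [Fin.val_zero]; omega),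
          if_pos (by simp only [Fin.val_zero]; omega)]
      have hvk1 : v k₁ = -1 := by
        rw [hvval k₁, if_neg (by omega), if_pos (by omega)]
      have hvk2 : v k₂ = 0 := by
        rw [hvval k₂, if_neg (by omega), if_neg (by omega)]
      have hvk3 : v k₃ = 0 := by
        rw [hvval k₃, if_neg (by omega), if_neg (by omega)]
      have hvpx : dotF v X0 = -2 := by
        rw [dotF_comm, hX0dot v, hs0v, hv0, hvk1, hvk2, hvk3]
        ring
      obtain ⟨cv, hcv, hQv, hpv⟩ := transfer v hvperp
      have hpv2 : 4 * ext n cv 0 - 2 * ext n cv 1 = -2 := by rw [hpv]; exact hvpx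
      have hcls : ∀ j : ℕ, ∃ (r : ℕ) (y : Fin (n + 2) → ℤ), 2 ≤ j → j ≤ tN →
          (1 ≤ r ∧ r ≤ n ∧
            (∀ l : Fin (n + 2), y l = if l.val = (k₃ : ℕ) then 1 else
              if l.val = (k₂ : ℕ) then -1 else if l.val = j then -1 else 0) ∧
            (∃ fjj : Fin (n + 2), (fjj : ℕ) = j ∧
              y = Pi.single k₃ (1 : ℤ) + Pi.single k₂ (-1) + Pi.single fjj (-1)) ∧
            dotF y y = 3 ∧ dotF y X0 = -2 ∧
            (∃ cy : Fin (n + 1) → ℤ, (φ cy : Fin (n + 2) → ℤ) = y ∧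
              (cy = intVec n 1 r ∨ cy = -intVec n 1 r - Pi.single 0 1)) ∧
            (ext n cv r - ext n cv (r + 1) = -1 - 2 * ext n cv 0)) := by
        intro j
        by_cases hj : 2 ≤ j ∧ j ≤ tN
        · obtain ⟨hj2, hjt⟩ := hj
          have hjlt : j < n + 2 := by omega
          set fj : Fin (n + 2) := ⟨j, hjlt⟩ with hfjdef
          have hfjv : (fj : ℕ) = j := rfl
          have hσfj : σ fj = 2 := by
            have hEj : ext (n + 1) σ j = σ fj := ext_lt (n + 1) σ j hjlt
            rw [← hEj]
            exact IH j (by omega) (by omega) (by omega)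
          set y : Fin (n + 2) → ℤ :=
            Pi.single k₃ (1 : ℤ) + Pi.single k₂ (-1) + Pi.single fj (-1) with hydef
          have hyp : y ∈ perp σ := by
            rw [mem_perp_iff, hydef, trip, hσk₃, hσfj]; ring
          have hyQ : dotF y y = 3 := by
            rw [hydef, trip,
              evP1 _ _ _ (vne _ _ (by omega)) (vne _ _ (by omega)),
              evP2 _ _ _ (vne _ _ (by omega)) (vne _ _ (by omega)),
              evP3 _ _ _ (vne _ _ (by omega)) (vne _ _ (by omega))]
            ring
          have hyP : dotF y X0 = -2 := by
            rw [hydef, trip, hX0k3, hX0k2,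
              hX0other fj (by omega) (by omega) (by omega) (by omega), hs0v]
            ring
          have hvfj : v fj = -1 := by
            rw [hvval fj, if_neg (by omega), if_pos (by omega)]
          have hyv : dotF v y = 1 := by
            rw [dotF_comm, hydef, trip, hvk3, hvk2, hvfj]
            ring
          obtain ⟨cy, hcy, hQy, hpy⟩ := transfer y hyp
          obtain ⟨ha1', r, hr1, hrn, ha2', hsh⟩ := shape_cases n aa hn ha ha1 cy
            (by rw [hQy, hyQ]) (by rw [hpy, hyP])
          have hwy : CForm n aa cv cy = 1 := by
            rw [hφ cv cy, hcv, hcy]; exact hyv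
          have h3 : CForm n aa cv (Pi.single 0 1) = -2 := by
            rw [hφ cv (Pi.single 0 1), hcv, ← hX0def]
            exact hvpx
          have hPAIR : CForm n aa cv (intVec n 1 r) = 1 := by
            rcases hsh with h | h
            · rw [← h]; exact hwy
            · rw [h, CForm_sub_right, CForm_neg_right] at hwy
              omega
          rw [CForm_intVec n aa r hr1 hrn ha1' ha2' cv] at hPAIR
          refine ⟨r, y, fun _ _ =>
            ⟨hr1, hrn, ?_, ⟨fj, hfjv, hydef⟩, hyQ, hyP, ⟨cy, hcy, hsh⟩, by omega⟩⟩
          intro l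
          rw [hydef, Pi.add_apply, Pi.add_apply, Pi.single_apply, Pi.single_apply,
            Pi.single_apply]
          simp only [Fin.ext_iff]
          split_ifs <;> first | (exfalso; omega) | ring
        · exact ⟨0, fun _ => 0, fun h1 h2 => absurd ⟨h1, h2⟩ hj⟩
      choose R Y hYprop using hcls
      have hinj : ∀ j j' : ℕ, 2 ≤ j → j ≤ tN → 2 ≤ j' → j' ≤ tN → j ≠ j' → R j ≠ R j' := by
        intro j j' hj2 hjt hj2' hjt' hne heq
        obtain ⟨hr1, hrn, hval, ⟨fj, hfjv, hydec⟩, hyQ3, hyPx, ⟨cy, hcy, hsh⟩, _⟩ :=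
          hYprop j hj2 hjt
        obtain ⟨hr1', hrn', hval', ⟨fj', hfjv', hydec'⟩, hyQ3', hyPx', ⟨cy', hcy', hsh'⟩, _⟩ :=
          hYprop j' hj2' hjt'
        have hdot2 : dotF (Y j) (Y j') = 2 := by
          rw [hydec, trip]
          have e1 : Y j' k₃ = 1 := by rw [hval' k₃, if_pos rfl]
          have e2 : Y j' k₂ = -1 := by rw [hval' k₂, if_neg (by omega), if_pos rfl]
          have e3 : Y j' fj = 0 := by
            rw [hval' fj, if_neg (by omega), if_neg (by omega), if_neg (by omega)]
          rw [e1, e2, e3]; ring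
        have hsame : (cy = cy') → False := by
          intro hcc
          have hee : Y j = Y j' := by rw [← hcy, ← hcy', hcc]
          have hv1 := congrFun hee fj
          rw [hval fj, hval' fj] at hv1
          rw [if_neg (by omega), if_neg (by omega), if_pos (by omega),
            if_neg (by omega), if_neg (by omega), if_neg (by omega)] at hv1
          norm_num at hv1
        rcases hsh with hA | hB <;> rcases hsh' with hA' | hB'
        · exact hsame (by rw [hA, hA', heq])
        · have hcc : cy' = -cy - Pi.single 0 1 := by rw [hB', hA, heq]
          have hyy : Y j' = -(Y j) - X0 := by
            rw [← hcy', hcc, coePhi cy, hcy]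
          have hm1 : dotF (Y j) (Y j') = -1 := by
            rw [hyy, dotF_sub_right, dotF_neg_right, hyQ3, hyPx]
            ring
          omega
        · have hcc : cy = -cy' - Pi.single 0 1 := by rw [hB, hA', heq]
          have hyy : Y j = -(Y j') - X0 := by
            rw [← hcy, hcc, coePhi cy', hcy']
          have hm1 : dotF (Y j) (Y j') = -1 := by
            rw [hyy, dotF_sub_left, dotF_neg_left, hyQ3', dotF_comm X0 (Y j'), hyPx']
            ring
          omega
        · exact hsame (by rw [hB, hB', heq])
      -- the quadratic form bound
      have hq := CForm_self n aa hn cv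
      rw [hQv, hvnorm] at hq
      have hc1odd : ext n cv 1 = 2 * ext n cv 0 + 1 := by omega
      have hsq1 : (2 * ext n cv 0 - ext n cv 1) ^ 2 = 1 := by
        have he : 2 * ext n cv 0 - ext n cv 1 = -1 := by omega
        rw [he]; norm_num
      have hc1sq : 1 ≤ ext n cv 1 ^ 2 := by rw [hc1odd]; exact odd_sq_ge_one _
      have hT2v := T2_nonneg n aa ha ha1 cv
      have hT4le : (∑ i ∈ Finset.range n, (ext n cv (i + 1) - ext n cv (i + 2)) ^ 2)
          ≤ (tN : ℤ) := by linarith only [hq, hc1sq, hT2v, hsq1]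
      set D : Finset ℕ := (Finset.Icc 2 tN).image (fun j => R j - 1) with hDdef
      have hDsub : D ⊆ Finset.range n := by
        intro x hx
        rw [hDdef, Finset.mem_image] at hx
        obtain ⟨j, hj, hxj⟩ := hx
        rw [Finset.mem_Icc] at hj
        obtain ⟨h1, h2, _⟩ := hYprop j hj.1 hj.2
        rw [Finset.mem_range]
        omega
      have hDcard : D.card = tN - 1 := by
        rw [hDdef, Finset.card_image_of_injOn, Nat.card_Icc]
        · omega
        · intro j hj j' hj' hee
          rw [Finset.mem_coe, Finset.mem_Icc] at hj hj'
          by_contra hne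
          have hee2 : R j - 1 = R j' - 1 := hee
          have h1 := (hYprop j hj.1 hj.2).1
          have h1' := (hYprop j' hj'.1 hj'.2).1
          have := hinj j j' hj.1 hj.2 hj'.1 hj'.2 hne
          omega
      have hdD : ∀ x ∈ D, ext n cv (x + 1) - ext n cv (x + 2) = -1 - 2 * ext n cv 0 := by
        intro x hx
        rw [hDdef, Finset.mem_image] at hx
        obtain ⟨j, hj, hxj⟩ := hx
        rw [Finset.mem_Icc] at hj
        obtain ⟨hr1, hrn, _, _, _, _, _, hstep⟩ := hYprop j hj.1 hj.2
        have e1 : x + 1 = R j := by omega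
        have e2 : x + 2 = R j + 1 := by omega
        rw [e1, e2]
        exact hstep
      have htel2 : (∑ i ∈ Finset.range n, (ext n cv (i + 1) - ext n cv (i + 2)))
          = ext n cv 1 := tel n cv
      have hsplit : (∑ i ∈ Finset.range n \ D, (ext n cv (i + 1) - ext n cv (i + 2)))
            + ∑ i ∈ D, (ext n cv (i + 1) - ext n cv (i + 2)) = ext n cv 1 := by
        rw [Finset.sum_sdiff hDsub]
        exact htel2
      have hsplit2 : (∑ i ∈ Finset.range n \ D, (ext n cv (i + 1) - ext n cv (i + 2)) ^ 2)
            + ∑ i ∈ D, (ext n cv (i + 1) - ext n cv (i + 2)) ^ 2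
          = ∑ i ∈ Finset.range n, (ext n cv (i + 1) - ext n cv (i + 2)) ^ 2 :=
        Finset.sum_sdiff hDsub
      have hcast : ((tN - 1 : ℕ) : ℤ) = (tN : ℤ) - 1 := by
        rw [Nat.cast_sub (by omega)]
        norm_num
      have hDsum : (∑ i ∈ D, (ext n cv (i + 1) - ext n cv (i + 2)))
          = ((tN : ℤ) - 1) * (-1 - 2 * ext n cv 0) := by
        rw [Finset.sum_congr rfl hdD, Finset.sum_const, hDcard, nsmul_eq_mul, hcast]
      have hDsumsq : (∑ i ∈ D, (ext n cv (i + 1) - ext n cv (i + 2)) ^ 2)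
          = ((tN : ℤ) - 1) * (-1 - 2 * ext n cv 0) ^ 2 := by
        rw [Finset.sum_congr rfl (fun x hx => by rw [hdD x hx]), Finset.sum_const, hDcard,
          nsmul_eq_mul, hcast]
      have hrestsum : (∑ i ∈ Finset.range n \ D, (ext n cv (i + 1) - ext n cv (i + 2)))
          = (tN : ℤ) * (2 * ext n cv 0 + 1) := by
        rw [hDsum] at hsplit
        rw [hc1odd] at hsplit
        linear_combination hsplit
      have habs2 := sum_abs_le_sum_sq (Finset.range n \ D)
        (fun i => ext n cv (i + 1) - ext n cv (i + 2))
      have htNnn : (0 : ℤ) ≤ (tN : ℤ) := by positivity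
      have htN2' : (2 : ℤ) ≤ (tN : ℤ) := by exact_mod_cast htN2
      have hu1 : 1 ≤ |2 * ext n cv 0 + 1| := Int.one_le_abs (by omega)
      have habs3 : (tN : ℤ) ≤ |(tN : ℤ) * (2 * ext n cv 0 + 1)| := by
        rw [abs_mul, abs_of_nonneg htNnn]
        calc (tN : ℤ) = (tN : ℤ) * 1 := by ring
          _ ≤ (tN : ℤ) * |2 * ext n cv 0 + 1| := mul_le_mul_of_nonneg_left hu1 htNnn
      have husq : 1 ≤ (-1 - 2 * ext n cv 0) ^ 2 := by
        have he : (-1 - 2 * ext n cv 0) = 2 * (-1 - ext n cv 0) + 1 := by ring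
        rw [he]
        exact odd_sq_ge_one _
      have h1 : (tN : ℤ) ≤ ∑ i ∈ Finset.range n \ D, (ext n cv (i + 1) - ext n cv (i + 2)) ^ 2 := by
        calc (tN : ℤ) ≤ |(tN : ℤ) * (2 * ext n cv 0 + 1)| := habs3
          _ = |∑ i ∈ Finset.range n \ D, (ext n cv (i + 1) - ext n cv (i + 2))| := by
              rw [hrestsum]
          _ ≤ _ := habs2
      have h2' : (tN : ℤ) - 1 ≤ ((tN : ℤ) - 1) * (-1 - 2 * ext n cv 0) ^ 2 := by
        calc (tN : ℤ) - 1 = ((tN : ℤ) - 1) * 1 := by ring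
          _ ≤ ((tN : ℤ) - 1) * (-1 - 2 * ext n cv 0) ^ 2 :=
            mul_le_mul_of_nonneg_left husq (by linarith only [htN2'])
      have hfin : 2 * (tN : ℤ) - 1
          ≤ ∑ i ∈ Finset.range n, (ext n cv (i + 1) - ext n cv (i + 2)) ^ 2 := by
        rw [← hsplit2, hDsumsq]
        linarith only [h1, h2']
      linarith only [hT4le, hfin, htN2']
  refine ⟨hform1, hK3, hσ0, ?_, ?_, hσk₃⟩
  · rw [← hk1fin]; exact hσk₁
  · intro i h2 hik
    have h := h2s i.val h2 hik
    rw [ext_apply (n + 1) σ i] at h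
    exact h


end Prism
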